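/- For every positive integer d, the number of integer tetrahedra with diameter d and perimeter 3d + 3, up to congruence, equals ⌈d/2⌉. Equivalently: the congruence classes are in bijection with integer pairs (B, C) with 1 ≤ B ≤ C ≤ d and B + C = d + 1, formed by folding two congruent (B, C, d)-triangles along their common side of length d until their apexes are 1 apart. -/

import Mathlib

/-- An integer tetrahedron: four affinely independent points in `ℝ³` all of whose
pairwise distances are (positive) integers. -/
def IsIntegerTetrahedron (v : Fin 4 → EuclideanSpace ℝ (Fin 3)) : Prop :=
  AffineIndependent ℝ v ∧ ∀ i j : Fin 4, i ≠ j → ∃ m : ℕ, 0 < m ∧ dist (v i) (v j) = m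

/-- `v` has perimeter `n`: the six edge lengths sum to `n` (ordered pairs count twice). -/
def TetraPerim (v : Fin 4 → EuclideanSpace ℝ (Fin 3)) (n : ℕ) : Prop :=
  ∑ i : Fin 4, ∑ j : Fin 4, dist (v i) (v j) = 2 * (n : ℝ)

/-- `v` has diameter `d`: the maximum of the six edge lengths is `d`. -/
def TetraDiam (v : Fin 4 → EuclideanSpace ℝ (Fin 3)) (d : ℕ) : Prop :=
  (∃ i j : Fin 4, dist (v i) (v j) = (d : ℝ)) ∧
    ∀ i j : Fin 4, dist (v i) (v j) ≤ (d : ℝ)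

/-- Two tetrahedra are congruent if after a permutation of the vertices all
corresponding edge lengths agree. -/
def TetraCongruent (v w : Fin 4 → EuclideanSpace ℝ (Fin 3)) : Prop :=
  ∃ σ : Equiv.Perm (Fin 4), ∀ i j : Fin 4, dist (w i) (w j) = dist (v (σ i)) (v (σ j))

/-- The number of integer tetrahedra of perimeter `n` and diameter `d`,
up to congruence. -/
noncomputable def tetraCount (n d : ℕ) : ℕ :=
  Nat.card (Quot (fun v w : {v : Fin 4 → EuclideanSpace ℝ (Fin 3) //
    IsIntegerTetrahedron v ∧ TetraPerim v n ∧ TetraDiam v d} =>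
      TetraCongruent v.1 w.1))

set_option linter.unusedSectionVars false
set_option maxHeartbeats 1000000

noncomputable def pt (a b c : ℝ) : EuclideanSpace ℝ (Fin 3) := !₂[a,b,c]

lemma dist_pt (a b c a' b' c' : ℝ) :
    dist (pt a b c) (pt a' b' c') = Real.sqrt ((a-a')^2+(b-b')^2+(c-c')^2) := by
  rw [EuclideanSpace.dist_eq]
  congr 1
  simp [pt, PiLp.toLp_apply, Fin.sum_univ_three, Real.dist_eq, sq_abs]

noncomputable def mx0 (rd rB rC : ℝ) : ℝ := (rB^2+rd^2-rC^2)/(2*rd)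
noncomputable def mh2 (rd rB rC : ℝ) : ℝ := rB^2 - (mx0 rd rB rC)^2
noncomputable def mh (rd rB rC : ℝ) : ℝ := Real.sqrt (mh2 rd rB rC)
noncomputable def mz (rd rB rC : ℝ) : ℝ := Real.sqrt (1 - 1/(4*(mh2 rd rB rC)))

noncomputable def model (rd rB rC : ℝ) : Fin 4 → EuclideanSpace ℝ (Fin 3) :=
  ![pt 0 0 0, pt rd 0 0, pt (mx0 rd rB rC) (mh rd rB rC) 0,
    pt (mx0 rd rB rC) (mh rd rB rC - 1/(2*mh rd rB rC)) (mz rd rB rC)]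

def mmat (rd rB rC : ℝ) : Fin 4 → Fin 4 → ℝ :=
  !![0,rd,rB,rB; rd,0,rC,rC; rB,rC,0,1; rB,rC,1,0]

section Model
variable {rd rB rC : ℝ}
variable (h1 : 1 ≤ rd) (h2 : 1 ≤ rB) (h3 : rB ≤ rC) (h4 : rC ≤ rd) (h5 : rB + rC = rd + 1)

include h1 h2 h3 h4 h5

lemma mh2_gt : 1/4 < mh2 rd rB rC := by
  have hd0 : (0:ℝ) < rd := by linarith
  have hC : rC = rd + 1 - rB := by linarith
  rw [mh2, mx0, hC]
  rw [div_pow, lt_sub_iff_add_lt, add_comm, ← lt_sub_iff_add_lt,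
    div_lt_iff₀ (by positivity : (0:ℝ) < (2*rd)^2)]
  nlinarith [mul_nonneg (by linarith : (0:ℝ) ≤ rB - 1) (by linarith : (0:ℝ) ≤ rd + 1 - 2*rB),
    mul_nonneg (mul_nonneg (by linarith : (0:ℝ) ≤ rd) (by linarith : (0:ℝ) ≤ rB - 1)) (by linarith : (0:ℝ) ≤ rd + 1 - 2*rB),
    mul_nonneg (mul_nonneg (by linarith : (0:ℝ) ≤ rd) (by linarith : (0:ℝ) ≤ rd)) (by linarith : (0:ℝ) ≤ rB - 1),
    mul_pos hd0 hd0]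

lemma mh_gt : 1/2 < mh rd rB rC := by
  have h := mh2_gt h1 h2 h3 h4 h5
  have h' : Real.sqrt (1/4) < Real.sqrt (mh2 rd rB rC) := Real.sqrt_lt_sqrt (by norm_num) h
  rwa [show (1/4 : ℝ) = (1/2)^2 by norm_num, Real.sqrt_sq (by norm_num)] at h'

lemma mh_sq : (mh rd rB rC)^2 = mh2 rd rB rC :=
  Real.sq_sqrt (by linarith [mh2_gt h1 h2 h3 h4 h5])

lemma mz_sq : (mz rd rB rC)^2 = 1 - 1/(4*(mh2 rd rB rC)) := by
  have h := mh2_gt h1 h2 h3 h4 h5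
  refine Real.sq_sqrt ?_
  have : 1/(4*(mh2 rd rB rC)) < 1 := by rw [div_lt_one (by linarith)]; linarith
  linarith

lemma mz_pos : 0 < mz rd rB rC := by
  have h := mh2_gt h1 h2 h3 h4 h5
  apply Real.sqrt_pos.2
  have : 1/(4*(mh2 rd rB rC)) < 1 := by rw [div_lt_one (by linarith)]; linarith
  linarith

set_option maxHeartbeats 1000000 in
lemma model_dist : ∀ i j, dist (model rd rB rC i) (model rd rB rC j) = mmat rd rB rC i j := by
  have hd0 : (0:ℝ) < rd := by linarith
  have hB0 : (0:ℝ) ≤ rB := by linarith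
  have hC0 : (0:ℝ) ≤ rC := by linarith
  have hm2 := mh2_gt h1 h2 h3 h4 h5
  have hh0 : 0 < mh rd rB rC := by linarith [mh_gt h1 h2 h3 h4 h5]
  have hne : mh rd rB rC ≠ 0 := ne_of_gt hh0
  set X := mx0 rd rB rC with hXdef
  set h := mh rd rB rC with hhdef
  set z := mz rd rB rC with hzdef
  have hX : 2*rd*X = rB^2 + rd^2 - rC^2 := by rw [hXdef, mx0]; field_simp
  have hh2 : h^2 = rB^2 - X^2 := mh_sq h1 h2 h3 h4 h5
  have hz2 : z^2 = 1 - 1/(4*h^2) := by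
    rw [hzdef, mz_sq h1 h2 h3 h4 h5, ← mh_sq h1 h2 h3 h4 h5]
  have e01 : dist (pt 0 0 0) (pt rd 0 0) = rd := by
    rw [dist_pt, show (0-rd)^2+((0:ℝ)-0)^2+((0:ℝ)-0)^2 = rd^2 by ring, Real.sqrt_sq hd0.le]
  have e02 : dist (pt 0 0 0) (pt X h 0) = rB := by
    rw [dist_pt, show (0-X)^2+(0-h)^2+((0:ℝ)-0)^2 = rB^2 from by linear_combination hh2,
      Real.sqrt_sq hB0]
  have e12 : dist (pt rd 0 0) (pt X h 0) = rC := by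
    rw [dist_pt, show (rd-X)^2+(0-h)^2+((0:ℝ)-0)^2 = rC^2 from by linear_combination hh2 - hX,
      Real.sqrt_sq hC0]
  have e03 : dist (pt 0 0 0) (pt X (h-1/(2*h)) z) = rB := by
    rw [dist_pt, show (0-X)^2+(0-(h-1/(2*h)))^2+(0-z)^2 = rB^2 from by
      rw [show ((0:ℝ)-z)^2 = z^2 from by ring, hz2]; field_simp
      linear_combination (16*h^2)*hh2, Real.sqrt_sq hB0]
  have e13 : dist (pt rd 0 0) (pt X (h-1/(2*h)) z) = rC := by
    rw [dist_pt, show (rd-X)^2+(0-(h-1/(2*h)))^2+(0-z)^2 = rC^2 from by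
      rw [show ((0:ℝ)-z)^2 = z^2 from by ring, hz2]; field_simp
      linear_combination (-16*h^2)*hX + (16*h^2)*hh2, Real.sqrt_sq hC0]
  have e23 : dist (pt X h 0) (pt X (h-1/(2*h)) z) = 1 := by
    rw [dist_pt, show (X-X)^2+(h-(h-1/(2*h)))^2+(0-z)^2 = 1^2 from by
      rw [show ((0:ℝ)-z)^2 = z^2 from by ring, hz2]; field_simp; ring,
      Real.sqrt_sq (by norm_num)]
  intro i j
  fin_cases i <;> fin_cases j <;>
    simp only [model, mmat, Matrix.cons_val_zero, Matrix.cons_val_one, Matrix.head_cons,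
      Matrix.cons_val_two, Matrix.cons_val_three, Matrix.tail_cons, Matrix.cons_val',
      Matrix.cons_val_fin_one, Matrix.empty_val', Matrix.head_fin_const, Matrix.of_apply,
      Fin.isValue] <;>
    first
      | exact dist_self _
      | exact e01 | exact e02 | exact e03 | exact e12 | exact e13 | exact e23
      | (rw [dist_comm]; first | exact e01 | exact e02 | exact e03 | exact e12 | exact e13 | exact e23)

end Model

section ModelAx
variable {rd rB rC : ℝ}
variable (h1 : 1 ≤ rd) (h2 : 1 ≤ rB) (h3 : rB ≤ rC) (h4 : rC ≤ rd) (h5 : rB + rC = rd + 1)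

noncomputable def e3 : Fin 3 ≃ {x : Fin 4 // x ≠ 0} :=
  Equiv.ofBijective ![⟨1, by decide⟩, ⟨2, by decide⟩, ⟨3, by decide⟩] (by decide)

lemma pts_affineIndependent (rd' h z x0 y : ℝ) (hd : rd' ≠ 0) (hh : h ≠ 0) (hz : z ≠ 0) :
    AffineIndependent ℝ ![pt 0 0 0, pt rd' 0 0, pt x0 h 0, pt x0 y z] := by
  rw [affineIndependent_iff_linearIndependent_vsub ℝ _ 0]
  rw [← linearIndependent_equiv e3]
  rw [Fintype.linearIndependent_iff]
  intro g hg
  have hfun : ∀ k : Fin 3,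
      ((fun i : {x : Fin 4 // x ≠ 0} => ![pt 0 0 0, pt rd' 0 0, pt x0 h 0, pt x0 y z] ↑i -ᵥ
        ![pt 0 0 0, pt rd' 0 0, pt x0 h 0, pt x0 y z] 0) ∘ e3) k
      = ![pt rd' 0 0 - pt 0 0 0, pt x0 h 0 - pt 0 0 0, pt x0 y z - pt 0 0 0] k := by
    intro k; fin_cases k <;> rfl
  simp only [hfun] at hg
  rw [Fin.sum_univ_three] at hg
  simp only [Matrix.cons_val_zero, Matrix.cons_val_one, Matrix.head_cons, Matrix.cons_val_two,
    Matrix.tail_cons] at hg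
  have c2 := congrArg (fun u => u 2) hg
  have c1 := congrArg (fun u => u 1) hg
  have c0 := congrArg (fun u => u 0) hg
  simp only [pt, PiLp.toLp_apply, PiLp.add_apply, PiLp.smul_apply, PiLp.sub_apply, PiLp.zero_apply,
    smul_eq_mul, Matrix.cons_val_zero, Matrix.cons_val_one, Matrix.head_cons,
    Matrix.cons_val_two, Matrix.tail_cons] at c0 c1 c2
  have hg2 : g 2 = 0 := by
    field_simp at c2
    have h' : g 2 * z = 0 := by linarith
    exact (mul_eq_zero.mp h').resolve_right hz
  have hg1 : g 1 = 0 := by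
    rw [hg2] at c1; field_simp at c1
    have h' : g 1 * h = 0 := by linarith
    exact (mul_eq_zero.mp h').resolve_right hh
  have hg0 : g 0 = 0 := by
    rw [hg1, hg2] at c0; field_simp at c0
    have h' : g 0 * rd' = 0 := by linarith
    exact (mul_eq_zero.mp h').resolve_right hd
  intro i; fin_cases i; exacts [hg0, hg1, hg2]

include h1 h2 h3 h4 h5 in
lemma model_affineIndependent : AffineIndependent ℝ (model rd rB rC) := by
  have hh := mh_gt h1 h2 h3 h4 h5
  have hz := mz_pos h1 h2 h3 h4 h5
  exact pts_affineIndependent rd (mh rd rB rC) (mz rd rB rC) (mx0 rd rB rC)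
    (mh rd rB rC - 1/(2*mh rd rB rC)) (by linarith) (by linarith) (ne_of_gt hz)

end ModelAx


noncomputable def stdT (d B : ℕ) : Fin 4 → EuclideanSpace ℝ (Fin 3) :=
  model d B (d+1-B)

def nmat (d B : ℕ) : Fin 4 → Fin 4 → ℕ :=
  !![0,d,B,B; d,0,d+1-B,d+1-B; B,d+1-B,0,1; B,d+1-B,1,0]

section Std
variable {d B : ℕ} (hd : 1 ≤ d) (hB1 : 1 ≤ B) (hB2 : 2*B ≤ d+1)
include hd hB1 hB2

lemma std_casts : 1 ≤ (d:ℝ) ∧ 1 ≤ (B:ℝ) ∧ (B:ℝ) ≤ ((d:ℝ)+1-(B:ℝ)) ∧ ((d:ℝ)+1-(B:ℝ)) ≤ (d:ℝ)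
    ∧ (B:ℝ) + ((d:ℝ)+1-(B:ℝ)) = (d:ℝ) + 1 := by
  refine ⟨by exact_mod_cast hd, by exact_mod_cast hB1, ?_, ?_, by ring⟩
  · have : (2*B : ℝ) ≤ (d:ℝ)+1 := by exact_mod_cast hB2
    linarith
  · have : (1:ℝ) ≤ B := by exact_mod_cast hB1
    linarith

lemma std_dist : ∀ i j, dist (stdT d B i) (stdT d B j) = ((nmat d B i j : ℕ) : ℝ) := by
  obtain ⟨c1, c2, c3, c4, c5⟩ := std_casts hd hB1 hB2
  have h := model_dist c1 c2 c3 c4 c5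
  intro i j
  rw [stdT, h i j, mmat, nmat]
  fin_cases i <;> fin_cases j <;> simp [Matrix.vecHead, Matrix.vecTail] <;> push_cast [Nat.cast_sub (by omega : B ≤ d+1)] <;> ring

lemma std_props : IsIntegerTetrahedron (stdT d B) ∧ TetraPerim (stdT d B) (3*d+3)
    ∧ TetraDiam (stdT d B) d := by
  obtain ⟨c1, c2, c3, c4, c5⟩ := std_casts hd hB1 hB2
  have hD := std_dist hd hB1 hB2
  refine ⟨⟨model_affineIndependent c1 c2 c3 c4 c5, ?_⟩, ?_, ?_⟩
  · intro i j hij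
    refine ⟨nmat d B i j, ?_, hD i j⟩
    fin_cases i <;> fin_cases j <;> simp_all [nmat, Matrix.vecHead, Matrix.vecTail] <;> omega
  · unfold TetraPerim
    simp only [hD]
    rw [Fin.sum_univ_four]
    simp only [Fin.sum_univ_four]
    simp [nmat, Matrix.vecHead, Matrix.vecTail]
    push_cast [Nat.cast_sub (by omega : B ≤ d+1)]
    ring
  · constructor
    · exact ⟨0, 1, by rw [hD]; norm_num [nmat]⟩
    · intro i j
      rw [hD]
      have : nmat d B i j ≤ d := by
        fin_cases i <;> fin_cases j <;> simp [nmat, Matrix.vecHead, Matrix.vecTail] <;> omega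
      exact_mod_cast this

end Std

-- helper: permutation sending 0,1 to any distinct pair
lemma exists_perm01 : ∀ i j : Fin 4, i ≠ j →
    ∃ σ : Equiv.Perm (Fin 4), σ 0 = i ∧ σ 1 = j := by decide

-- strict triangle inequality for affinely independent points
lemma face_strict {v : Fin 4 → EuclideanSpace ℝ (Fin 3)} (hv : AffineIndependent ℝ v)
    {i j k : Fin 4} (hij : i ≠ j) (hik : i ≠ k) (hjk : j ≠ k) :
    dist (v i) (v j) < dist (v i) (v k) + dist (v k) (v j) := by
  rcases lt_or_eq_of_le (dist_triangle (v i) (v k) (v j)) with h | h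
  · exact h
  · exfalso
    have hw : Wbtw ℝ (v i) (v k) (v j) := dist_add_dist_eq_iff.mp h.symm
    have hcol := hw.collinear
    have hf : Function.Injective ![i, k, j] := by
      intro a b hab
      fin_cases a <;> fin_cases b <;>
        simp only [Matrix.cons_val_zero, Matrix.cons_val_one, Matrix.head_cons,
          Matrix.cons_val_two, Matrix.tail_cons] at hab <;>
        first | rfl | exact absurd hab hik | exact absurd hab hik.symm | exact absurd hab hij | exact absurd hab hij.symm | exact absurd hab hjk | exact absurd hab hjk.symm
    have h3 : AffineIndependent ℝ (v ∘ (⟨![i,k,j], hf⟩ : Fin 3 ↪ Fin 4)) :=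
      hv.comp_embedding _
    have h3' : AffineIndependent ℝ ![v i, v k, v j] := by
      convert h3 using 1
      funext a; fin_cases a <;> rfl
    rw [affineIndependent_iff_not_collinear_set] at h3'
    exact h3' hcol
  
-- inner product from three distances
lemma inner_of_dists (p q0 q1 : EuclideanSpace ℝ (Fin 3)) (r s t : ℝ)
    (h0 : dist p q0 = r) (h1 : dist p q1 = s) (hq : dist q1 q0 = t) :
    inner ℝ (p - q0) (q1 - q0) = (r^2 + t^2 - s^2)/2 := by
  have e0 : ‖p - q0‖ = r := by rw [← dist_eq_norm]; exact h0
  have e1 : ‖p - q1‖ = s := by rw [← dist_eq_norm]; exact h1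
  have e2 : ‖q1 - q0‖ = t := by rw [← dist_eq_norm]; exact hq
  have key : ‖(p - q0) - (q1 - q0)‖^2
      = ‖p - q0‖^2 - 2*inner ℝ (p - q0) (q1 - q0) + ‖q1 - q0‖^2 := by
    rw [@norm_sub_sq_real]
  rw [show (p - q0) - (q1 - q0) = p - q1 by abel] at key
  rw [e0, e1, e2] at key
  linarith

lemma classify {d : ℕ} (hd : 1 ≤ d) (v : Fin 4 → EuclideanSpace ℝ (Fin 3))
    (hITet : IsIntegerTetrahedron v) (hPer : TetraPerim v (3*d+3)) (hDia : TetraDiam v d) :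
    ∃ B : ℕ, 1 ≤ B ∧ 2*B ≤ d+1 ∧ TetraCongruent v (stdT d B) := by
  obtain ⟨hAff, hN⟩ := hITet
  obtain ⟨⟨i0, j0, hd0⟩, hbound⟩ := hDia
  have hij0 : i0 ≠ j0 := by
    rintro rfl
    rw [dist_self] at hd0
    have : d = 0 := by exact_mod_cast hd0.symm
    omega
  obtain ⟨σ, hσ0, hσ1⟩ := exists_perm01 i0 j0 hij0
  set w : Fin 4 → EuclideanSpace ℝ (Fin 3) := fun i => v (σ i) with hw
  have hwAff : AffineIndependent ℝ w := (affineIndependent_equiv σ).mpr hAff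
  have hNw : ∀ i j : Fin 4, i ≠ j → ∃ m : ℕ, 0 < m ∧ dist (w i) (w j) = m := fun i j h =>
    hN (σ i) (σ j) (fun he => h (σ.injective he))
  obtain ⟨B, hBpos, hB⟩ := hNw 0 2 (by decide)
  obtain ⟨C, hCpos, hC⟩ := hNw 1 2 (by decide)
  obtain ⟨b, hbpos, hb⟩ := hNw 0 3 (by decide)
  obtain ⟨c, hcpos, hc⟩ := hNw 1 3 (by decide)
  obtain ⟨a, hapos, ha⟩ := hNw 2 3 (by decide)
  have h01 : dist (w 0) (w 1) = (d:ℝ) := by rw [hw]; simp only; rw [hσ0, hσ1]; exact hd0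
  -- strict triangle inequalities
  have t2 : (d:ℝ) < B + C := by
    have h := face_strict hwAff (show (0:Fin 4) ≠ 1 by decide) (show (0:Fin 4) ≠ 2 by decide)
      (show (1:Fin 4) ≠ 2 by decide)
    rw [h01, hB, dist_comm (w 2) (w 1), hC] at h
    linarith
  have t3 : (d:ℝ) < b + c := by
    have h := face_strict hwAff (show (0:Fin 4) ≠ 1 by decide) (show (0:Fin 4) ≠ 3 by decide)
      (show (1:Fin 4) ≠ 3 by decide)
    rw [h01, hb, dist_comm (w 3) (w 1), hc] at h
    linarith
  have t2n : d + 1 ≤ B + C := by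
    have : d < B + C := by exact_mod_cast (by push_cast; linarith : (d:ℝ) < ((B+C : ℕ):ℝ))
    omega
  have t3n : d + 1 ≤ b + c := by
    have : d < b + c := by exact_mod_cast (by push_cast; linarith : (d:ℝ) < ((b+c : ℕ):ℝ))
    omega
  -- perimeter
  have hsw : ∑ i, ∑ j, dist (w i) (w j) = 2 * ((3*d+3 : ℕ) : ℝ) := by
    have h2 : ∑ i, ∑ j, dist (w i) (w j) = ∑ i, ∑ j, dist (v i) (v j) := by
      rw [← Equiv.sum_comp σ (fun i => ∑ j, dist (v i) (v j))]
      exact Finset.sum_congr rfl fun i _ => (Equiv.sum_comp σ fun j => dist (v (σ i)) (v j))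
    rw [h2]; exact hPer
  have hper : d + B + C + b + c + a = 3*d + 3 := by
    rw [Fin.sum_univ_four] at hsw
    simp only [Fin.sum_univ_four] at hsw
    rw [dist_comm (w 1) (w 0), dist_comm (w 2) (w 0), dist_comm (w 2) (w 1),
      dist_comm (w 3) (w 0), dist_comm (w 3) (w 1), dist_comm (w 3) (w 2),
      dist_self, dist_self, dist_self, dist_self, h01, hB, hC, hb, hc, ha] at hsw
    have : ((d + B + C + b + c + a : ℕ) : ℝ) = ((3*d+3 : ℕ) : ℝ) := by push_cast at hsw ⊢; linarith
    exact_mod_cast this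
  have ha1 : a = 1 := by omega
  have hBC : B + C = d + 1 := by omega
  have hbc : b + c = d + 1 := by omega
  -- inner product argument : B = b
  have i2 : inner ℝ (w 2 - w 0) (w 1 - w 0) = ((B:ℝ)^2 + (d:ℝ)^2 - (C:ℝ)^2)/2 :=
    inner_of_dists (w 2) (w 0) (w 1) B C d (by rw [dist_comm]; exact hB)
      (by rw [dist_comm]; exact hC) (by rw [dist_comm]; exact h01)
  have i3 : inner ℝ (w 3 - w 0) (w 1 - w 0) = ((b:ℝ)^2 + (d:ℝ)^2 - (c:ℝ)^2)/2 :=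
    inner_of_dists (w 3) (w 0) (w 1) b c d (by rw [dist_comm]; exact hb)
      (by rw [dist_comm]; exact hc) (by rw [dist_comm]; exact h01)
  have idiff : inner ℝ (w 2 - w 3) (w 1 - w 0) = ((B:ℝ)^2 - (C:ℝ)^2 - (b:ℝ)^2 + (c:ℝ)^2)/2 := by
    have hsub : w 2 - w 3 = (w 2 - w 0) - (w 3 - w 0) := by abel
    rw [hsub, inner_sub_left, i2, i3]; ring
  have hCS : |(inner ℝ (w 2 - w 3) (w 1 - w 0) : ℝ)| ≤ ‖w 2 - w 3‖ * ‖w 1 - w 0‖ :=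
    abs_real_inner_le_norm _ _
  have n23 : ‖w 2 - w 3‖ = 1 := by
    rw [← dist_eq_norm, ha, ha1]; norm_num
  have n10 : ‖w 1 - w 0‖ = d := by
    rw [← dist_eq_norm, dist_comm]; exact h01
  have hC' : (C:ℝ) = (d:ℝ)+1-(B:ℝ) := by
    have h' : (B:ℝ) + (C:ℝ) = (d:ℝ) + 1 := by exact_mod_cast hBC
    linarith
  have hc' : (c:ℝ) = (d:ℝ)+1-(b:ℝ) := by
    have h' : (b:ℝ) + (c:ℝ) = (d:ℝ) + 1 := by exact_mod_cast hbc
    linarith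
  have key : ((d:ℝ)+1) * |(B:ℝ) - (b:ℝ)| ≤ (d:ℝ) := by
    have heq : ((B:ℝ)^2 - (C:ℝ)^2 - (b:ℝ)^2 + (c:ℝ)^2)/2 = ((d:ℝ)+1)*((B:ℝ) - (b:ℝ)) := by
      rw [hC', hc']; ring
    calc ((d:ℝ)+1) * |(B:ℝ) - (b:ℝ)| = |((d:ℝ)+1)*((B:ℝ) - (b:ℝ))| := by
          rw [abs_mul, abs_of_nonneg (show (0:ℝ) ≤ (d:ℝ)+1 by positivity)]
      _ = |(inner ℝ (w 2 - w 3) (w 1 - w 0) : ℝ)| := by rw [idiff, heq]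
      _ ≤ ‖w 2 - w 3‖ * ‖w 1 - w 0‖ := hCS
      _ = (d:ℝ) := by rw [n23, n10]; ring
  have hBb : B = b := by
    by_contra hne
    have h1' : (1:ℝ) ≤ |(B:ℝ) - (b:ℝ)| := by
      have hz : (B:ℤ) ≠ (b:ℤ) := by exact_mod_cast hne
      have hz2 : 1 ≤ |(B:ℤ) - (b:ℤ)| := Int.one_le_abs (by omega)
      have h3' : ((1:ℤ):ℝ) ≤ ((|(B:ℤ) - (b:ℤ)| : ℤ) : ℝ) := by exact_mod_cast hz2
      rwa [Int.cast_abs, Int.cast_one, Int.cast_sub, Int.cast_natCast, Int.cast_natCast] at h3'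
    nlinarith [key, h1', (show (0:ℝ) ≤ (d:ℝ) by positivity)]
  have hCc : C = c := by omega
  -- assemble congruence
  have hk1 : 1 ≤ min B C := le_min hBpos hCpos
  have hk2 : 2 * min B C ≤ d + 1 := by
    have h1' : min B C ≤ B := min_le_left _ _
    have h2' : min B C ≤ C := min_le_right _ _
    omega
  refine ⟨min B C, hk1, hk2, ?_⟩
  have hD := std_dist hd hk1 hk2
  -- restated distance facts about v directly
  have HB : dist (v (σ 0)) (v (σ 2)) = ((B:ℕ):ℝ) := hB
  have HB' : dist (v (σ 2)) (v (σ 0)) = ((B:ℕ):ℝ) := by rw [dist_comm]; exact hB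
  have HC : dist (v (σ 1)) (v (σ 2)) = ((C:ℕ):ℝ) := hC
  have HC' : dist (v (σ 2)) (v (σ 1)) = ((C:ℕ):ℝ) := by rw [dist_comm]; exact hC
  have Hb : dist (v (σ 0)) (v (σ 3)) = ((B:ℕ):ℝ) := by rw [hBb]; exact hb
  have Hb' : dist (v (σ 3)) (v (σ 0)) = ((B:ℕ):ℝ) := by rw [dist_comm, hBb]; exact hb
  have Hc : dist (v (σ 1)) (v (σ 3)) = ((C:ℕ):ℝ) := by rw [hCc]; exact hc
  have Hc' : dist (v (σ 3)) (v (σ 1)) = ((C:ℕ):ℝ) := by rw [dist_comm, hCc]; exact hc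
  have Ha : dist (v (σ 2)) (v (σ 3)) = (1:ℝ) := by
    have := ha; rw [ha1] at this; exact_mod_cast this
  have Ha' : dist (v (σ 3)) (v (σ 2)) = (1:ℝ) := by rw [dist_comm]; exact Ha
  have H01 : dist (v (σ 0)) (v (σ 1)) = ((d:ℕ):ℝ) := h01
  have H01' : dist (v (σ 1)) (v (σ 0)) = ((d:ℕ):ℝ) := by rw [dist_comm]; exact h01
  by_cases hle : B ≤ C
  · have hkB : min B C = B := min_eq_left hle
    have hC2 : d + 1 - B = C := by omega
    refine ⟨σ, ?_⟩
    intro i j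
    rw [hD i j]
    fin_cases i <;> fin_cases j <;>
      simp [nmat, hkB, hC2, HB, HB', HC, HC', Hb, Hb', Hc, Hc', Ha, Ha', H01, H01',
        Matrix.vecHead, Matrix.vecTail]
  · have hkB : min B C = C := min_eq_right (le_of_not_ge hle)
    have hC2 : d + 1 - C = B := by omega
    refine ⟨(Equiv.swap 0 1).trans σ, ?_⟩
    have hs0 : ((Equiv.swap 0 1).trans σ) 0 = σ 1 := congrArg σ (by decide)
    have hs1 : ((Equiv.swap 0 1).trans σ) 1 = σ 0 := congrArg σ (by decide)
    have hs2 : ((Equiv.swap 0 1).trans σ) 2 = σ 2 := congrArg σ (by decide)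
    have hs3 : ((Equiv.swap 0 1).trans σ) 3 = σ 3 := congrArg σ (by decide)
    intro i j
    rw [hD i j]
    fin_cases i <;> fin_cases j <;>
      simp [nmat, hkB, hC2, hs0, hs1, hs2, hs3, HB, HB', HC, HC', Hb, Hb', Hc, Hc', Ha, Ha',
        H01, H01', Matrix.vecHead, Matrix.vecTail]

lemma tc_refl (v : Fin 4 → EuclideanSpace ℝ (Fin 3)) : TetraCongruent v v :=
  ⟨Equiv.refl _, fun _ _ => rfl⟩

lemma tc_symm {v w : Fin 4 → EuclideanSpace ℝ (Fin 3)} (h : TetraCongruent v w) :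
    TetraCongruent w v := by
  obtain ⟨σ, hσ⟩ := h
  exact ⟨σ.symm, fun i j => by rw [hσ (σ.symm i) (σ.symm j), Equiv.apply_symm_apply,
    Equiv.apply_symm_apply]⟩

lemma tc_trans {u v w : Fin 4 → EuclideanSpace ℝ (Fin 3)} (h1 : TetraCongruent u v)
    (h2 : TetraCongruent v w) : TetraCongruent u w := by
  obtain ⟨σ1, hσ1⟩ := h1
  obtain ⟨σ2, hσ2⟩ := h2
  exact ⟨σ2.trans σ1, fun i j => by rw [hσ2 i j, hσ1 (σ2 i) (σ2 j)]; rfl⟩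

noncomputable def cub (v : Fin 4 → EuclideanSpace ℝ (Fin 3)) : ℝ :=
  ∑ i, ∑ j, (dist (v i) (v j))^3

lemma cub_congr {v w : Fin 4 → EuclideanSpace ℝ (Fin 3)} (h : TetraCongruent v w) :
    cub w = cub v := by
  obtain ⟨σ, hσ⟩ := h
  unfold cub
  have h2 : ∑ i, ∑ j, (dist (w i) (w j))^3 = ∑ i, ∑ j, (dist (v (σ i)) (v (σ j)))^3 := by
    refine Finset.sum_congr rfl fun i _ => Finset.sum_congr rfl fun j _ => by rw [hσ i j]
  rw [h2, ← Equiv.sum_comp σ (fun i => ∑ j, (dist (v i) (v j))^3)]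
  exact Finset.sum_congr rfl fun i _ => (Equiv.sum_comp σ fun j => (dist (v (σ i)) (v j))^3)

lemma cub_std {d B : ℕ} (hd : 1 ≤ d) (hB1 : 1 ≤ B) (hB2 : 2*B ≤ d+1) :
    cub (stdT d B) = ((2*d^3+4*B^3+4*(d+1-B)^3+2 : ℕ) : ℝ) := by
  have hD := std_dist hd hB1 hB2
  unfold cub
  simp only [hD]
  rw [Fin.sum_univ_four]
  simp only [Fin.sum_univ_four]
  simp [nmat, Matrix.vecHead, Matrix.vecTail]
  push_cast
  ring

lemma std_inj {d B1 B2 : ℕ} (hd : 1 ≤ d) (h11 : 1 ≤ B1) (h12 : 2*B1 ≤ d+1)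
    (h21 : 1 ≤ B2) (h22 : 2*B2 ≤ d+1)
    (h : TetraCongruent (stdT d B1) (stdT d B2)) : B1 = B2 := by
  have hc := cub_congr h
  rw [cub_std hd h11 h12, cub_std hd h21 h22] at hc
  have hn : 2*d^3+4*B2^3+4*(d+1-B2)^3+2 = 2*d^3+4*B1^3+4*(d+1-B1)^3+2 := by exact_mod_cast hc
  have hz : (2*(d:ℤ)^3+4*(B2:ℤ)^3+4*((d:ℤ)+1-B2)^3+2 : ℤ)
      = 2*(d:ℤ)^3+4*(B1:ℤ)^3+4*((d:ℤ)+1-B1)^3+2 := by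
    have e1 : ((d+1-B1 : ℕ) : ℤ) = (d:ℤ)+1-B1 := by
      rw [Nat.cast_sub (by omega)]; push_cast; ring
    have e2 : ((d+1-B2 : ℕ) : ℤ) = (d:ℤ)+1-B2 := by
      rw [Nat.cast_sub (by omega)]; push_cast; ring
    have := congrArg (fun n : ℕ => (n : ℤ)) hn
    push_cast [e1, e2] at this
    push_cast
    linarith
  have hfac : 12*((d:ℤ)+1)*((B1:ℤ)-B2)*((B1:ℤ)+B2-((d:ℤ)+1)) = 0 := by linear_combination -hz
  have hd1 : ((d:ℤ)+1) ≠ 0 := by positivity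
  rcases mul_eq_zero.mp hfac with h' | h'
  · rcases mul_eq_zero.mp h' with h'' | h''
    · exfalso; rcases mul_eq_zero.mp h'' with h3 | h3
      · norm_num at h3
      · exact hd1 h3
    · have : (B1:ℤ) = B2 := by linarith
      exact_mod_cast this
  · have : (B1:ℤ) + B2 = (d:ℤ)+1 := by linarith
    have hnn : B1 + B2 = d+1 := by exact_mod_cast this
    omega

theorem tetraCount_perim_3d_add_3 (d : ℕ) (hd : 0 < d) :
    tetraCount (3 * d + 3) d = (d + 1) / 2 := by
  classical
  let S := {v : Fin 4 → EuclideanSpace ℝ (Fin 3) //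
    IsIntegerTetrahedron v ∧ TetraPerim v (3*d+3) ∧ TetraDiam v d}
  let R : S → S → Prop := fun v w => TetraCongruent v.1 w.1
  have hequiv : Equivalence R :=
    ⟨fun x => tc_refl x.1, fun h => tc_symm h, fun h1 h2 => tc_trans h1 h2⟩
  have hdd : 1 ≤ d := hd
  have hmem : ∀ k : Fin ((d+1)/2), IsIntegerTetrahedron (stdT d (k.1+1)) ∧
      TetraPerim (stdT d (k.1+1)) (3*d+3) ∧ TetraDiam (stdT d (k.1+1)) d := by
    intro k
    have hk := k.2
    exact std_props hdd (by omega) (by omega)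
  let f : Fin ((d+1)/2) → Quot R := fun k => Quot.mk R ⟨stdT d (k.1+1), hmem k⟩
  have hinj : Function.Injective f := by
    intro k k' hkk
    have := Quot.eq.mp hkk
    rw [hequiv.eqvGen_iff] at this
    have hB := std_inj hdd (by omega) (by have := k.2; omega)
      (by omega) (by have := k'.2; omega) this
    exact Fin.ext (by omega)
  have hsurj : Function.Surjective f := by
    intro q
    induction q using Quot.ind with
    | _ x =>
      obtain ⟨v, hv⟩ := x
      obtain ⟨B, hB1, hB2, hcong⟩ := classify hdd v hv.1 hv.2.1 hv.2.2
      obtain ⟨B', rfl⟩ : ∃ B', B = B' + 1 := ⟨B-1, by omega⟩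
      refine ⟨⟨B', by omega⟩, ?_⟩
      exact Quot.sound (tc_symm hcong)
  have hcard : Nat.card (Fin ((d+1)/2)) = Nat.card (Quot R) :=
    Nat.card_eq_of_bijective f ⟨hinj, hsurj⟩
  have heq : tetraCount (3 * d + 3) d = Nat.card (Quot R) := rfl
  rw [heq, ← hcard, Nat.card_eq_fintype_card, Fintype.card_fin]
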